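/- Let η be a substitution over A with growing letter a, and let u ∈ A^{ℤ≥0} be a right-infinite periodic point of η with u_0 = a and period p ≥ 1 (so η^p(u) = u). For every integer n ≥ 1, there exist a unique integer k divisible by p and a unique a-admissible sequence (m_i, a_i)_{i=0,…,k-1} such that m_{k-1} m_{k-2} ⋯ m_{k-p} ≠ ε and u_0 u_1 ⋯ u_{n-1} = η^{k-1}(m_{k-1}) η^{k-2}(m_{k-2}) ⋯ η^0(m_0). -/

import Mathlib

open Filter List

variable {A : Type*}

/-- A substitution applied to a word: concatenation of the images of its letters. -/
def substW (η : A → List A) (w : List A) : List A := (w.map η).flatten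

/-- The `k`-th iterate of a substitution applied to a word. -/
def iterW (η : A → List A) (k : ℕ) (w : List A) : List A := (substW η)^[k] w

/-- `η` is a substitution: nonempty images and at least one growing letter. -/
def IsSubstitution (η : A → List A) : Prop :=
  (∀ c, η c ≠ []) ∧ ∃ a, Tendsto (fun k => (iterW η k [a]).length) atTop atTop

/-- `(m i, a i)` for `i = 0, …, len-1` is an `x`-admissible sequence:
`m (i) ++ [a i]` is a prefix of `η (a (i+1))` and `m (len-1) ++ [a (len-1)]`
is a prefix of `η x`. -/
def AdmSeq (η : A → List A) (len : ℕ) (m : ℕ → List A) (a : ℕ → A) (x : A) : Prop :=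
  (∀ i, i + 1 < len → (m i ++ [a i]) <+: η (a (i + 1))) ∧
  (1 ≤ len → (m (len - 1) ++ [a (len - 1)]) <+: η x)

/-- `Σ_{j<k} |η^j(m_j)|`. -/
def sumLen (η : A → List A) (k : ℕ) (m : ℕ → List A) : ℕ :=
  ∑ j ∈ Finset.range k, (iterW η j (m j)).length

/-- `η^{k-1}(m_{k-1}) η^{k-2}(m_{k-2}) ⋯ η^0(m_0)`. -/
def concatDT (η : A → List A) (k : ℕ) (m : ℕ → List A) : List A :=
  ((List.range k).reverse.map (fun j => iterW η j (m j))).flatten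

/-- The digit word `|m_{k-1}| ⊙ |m_{k-2}| ⊙ ⋯ ⊙ |m_0|`. -/
def dtDigits (k : ℕ) (m : ℕ → List A) : List ℕ :=
  (List.range k).reverse.map (fun j => (m j).length)

/-- Partial run of the automaton `A_{η,x}`: from state `x`, the digit `d`
moves to the `d`-th letter of `η x` when `d < |η x|`. -/
def run (η : A → List A) : List ℕ → A → Option A
  | [], x => some x
  | d :: w, x => if h : d < (η x).length then run η w ((η x)[d]) else none

/-- `u` restricted to nonnegative positions is a periodic point of `η` of period `p`:
every `η^p`-image of a prefix of `u` is again a prefix of `u`. -/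
def RightPer (η : A → List A) (p : ℕ) (u : ℤ → A) : Prop :=
  ∀ n : ℕ, ∀ j : ℕ, j < (iterW η p (List.ofFn (fun i : Fin (n+1) => u i))).length →
    (iterW η p (List.ofFn (fun i : Fin (n+1) => u i)))[j]? = some (u j)

/-- `u` restricted to negative positions is a periodic point of `η` of period `p`:
every `η^p`-image of a suffix `u_{-(n+1)} ⋯ u_{-1}` of the left part is again a
suffix of the left part of `u`. -/
def LeftPer (η : A → List A) (p : ℕ) (u : ℤ → A) : Prop :=
  ∀ n : ℕ, ∀ j : ℕ,
    j < (iterW η p (List.ofFn (fun i : Fin (n+1) => u ((i : ℤ) - (n+1))))).length →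
    (iterW η p (List.ofFn (fun i : Fin (n+1) => u ((i : ℤ) - (n+1)))))[j]? =
      some (u ((j : ℤ) -
        (iterW η p (List.ofFn (fun i : Fin (n+1) => u ((i : ℤ) - (n+1))))).length))

/-- `u : ℤ → A` is a two-sided periodic point of `η` of period `p ≥ 1` with
growing seed `u₋₁ | u₀`. -/
def TwoSidedPerPoint (η : A → List A) (p : ℕ) (u : ℤ → A) : Prop :=
  1 ≤ p ∧ RightPer η p u ∧ LeftPer η p u ∧
  Tendsto (fun k => (iterW η k [u 0]).length) atTop atTop ∧
  Tendsto (fun k => (iterW η k [u (-1)]).length) atTop atTop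

/-- The Dumont–Thomas decomposition data of a positive integer `n` with respect to
the letter `x` (Theorem of Dumont–Thomas for the right-infinite part):
`p ∣ k`, `p ≤ k`, the sequence is `x`-admissible, `m_{k-1} ⋯ m_{k-p} ≠ ε` and
`Σ_{j<k} |η^j(m_j)| = n`. -/
def PosSpec (η : A → List A) (p : ℕ) (x : A) (n : ℤ) (k : ℕ) (m : ℕ → List A)
    (a : ℕ → A) : Prop :=
  p ∣ k ∧ p ≤ k ∧ AdmSeq η k m a x ∧ (∃ i, i < p ∧ m (k - 1 - i) ≠ []) ∧
  (sumLen η k m : ℤ) = n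

/-- The Dumont–Thomas decomposition data of an integer `n ≤ -2` with respect to
the letter `b` (Theorem of Dumont–Thomas for the left-infinite part). -/
def NegSpec (η : A → List A) (p : ℕ) (b : A) (n : ℤ) (k : ℕ) (m : ℕ → List A)
    (a : ℕ → A) : Prop :=
  p ∣ k ∧ p ≤ k ∧ AdmSeq η k m a b ∧
  ((List.range p).map (fun i => iterW η (p - 1 - i) (m (k - 1 - i)))).flatten
      ++ [a (k - p)] ≠ iterW η p [b] ∧
  (sumLen η k m : ℤ) = n + (iterW η k [b]).length

/-- `w` is the Dumont–Thomas complement representation `rep_u(n)` of `n ∈ ℤ`. -/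
def RepSpec (η : A → List A) (p : ℕ) (u : ℤ → A) (n : ℤ) (w : List ℕ) : Prop :=
  (n = 0 ∧ w = [0]) ∨ (n = -1 ∧ w = [1]) ∨
  (1 ≤ n ∧ ∃ k m a, PosSpec η p (u 0) n k m a ∧ w = 0 :: dtDigits k m) ∨
  (n ≤ -2 ∧ ∃ k m a, NegSpec η p (u (-1)) n k m a ∧ w = 1 :: dtDigits k m)

/-- Run of the automaton `A_{η,s}` with initial state `start`: the first digit
`0` (resp. `1`) moves to `u 0` (resp. `u (-1)`). -/
def runSeed (η : A → List A) (u : ℤ → A) : List ℕ → Option A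
  | [] => none
  | d :: w => if d = 0 then run η w (u 0) else if d = 1 then run η w (u (-1)) else none

/-- `|η^{k-p-1}(m_{k-1}) ⋯ η^0(m_p)|`, the `u`-quotient of a positive integer. -/
def uQuotPos (η : A → List A) (p k : ℕ) (m : ℕ → List A) : ℤ :=
  ∑ j ∈ Finset.range (k - p), ((iterW η j (m (j + p))).length : ℤ)

/-- `w = tail_{η,p,x}(n)`: the digit word of the unique `x`-admissible sequence of
length `p` whose length-sum is `n`. -/
def TailSpec (η : A → List A) (p : ℕ) (x : A) (n : ℕ) (w : List ℕ) : Prop :=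
  ∃ m a, AdmSeq η p m a x ∧ sumLen η p m = n ∧ w = dtDigits p m

/-- Radix order: shorter words first, ties broken lexicographically. -/
def radLt (v w : List ℕ) : Prop :=
  v.length < w.length ∨ (v.length = w.length ∧ List.Lex (· < ·) v w)

/-- Reversed-radix order: longer words first, ties broken lexicographically. -/
def revLt (v w : List ℕ) : Prop :=
  w.length < v.length ∨ (v.length = w.length ∧ List.Lex (· < ·) v w)

/-- The total order `≺` on `{0,1}D*`. -/
def precLt (v w : List ℕ) : Prop :=
  (v.head? = some 1 ∧ w.head? = some 0) ∨
  (v.head? = some 0 ∧ w.head? = some 0 ∧ radLt v w) ∨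
  (v.head? = some 1 ∧ w.head? = some 1 ∧ revLt v w)

/-- The base-2 value `Σ_{i<k} w_i 2^i` of the word `w = w_{k-1} ⋯ w_0`. -/
def natVal2 (w : List ℕ) : ℕ := w.foldl (fun acc d => 2 * acc + d) 0

/-- The two's complement value `Σ_{i<k} w_i 2^i − w_{k-1} 2^k`. -/
def val2c (w : List ℕ) : ℤ := (natVal2 w : ℤ) - (w.headI : ℤ) * 2 ^ w.length

/-- Fibonacci numbers with `F 0 = 1`, `F 1 = 2`. -/
def fib2 : ℕ → ℕ
  | 0 => 1
  | 1 => 2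
  | n + 2 => fib2 (n + 1) + fib2 n

/-- The Fibonacci complement value `Σ_{i<k} w_i F_i − w_{k-1} F_k`
of the word `w = w_{k-1} ⋯ w_0`. -/
def valFc (w : List ℕ) : ℤ :=
  (∑ i ∈ Finset.range w.length, (w.reverse.getD i 0 : ℤ) * fib2 i) -
    (w.headI : ℤ) * fib2 w.length

/-! ### Auxiliary lemmas for the Dumont–Thomas theorem -/

section DTAux

variable {η : A → List A} [Inhabited A]

lemma substW_cons (η : A → List A) (c : A) (w : List A) :
    substW η (c :: w) = η c ++ substW η w := by simp [substW]

lemma substW_append (η : A → List A) (v w : List A) :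
    substW η (v ++ w) = substW η v ++ substW η w := by simp [substW]

lemma substW_singleton (η : A → List A) (c : A) : substW η [c] = η c := by
  simp [substW]

lemma iterW_zero (η : A → List A) (w : List A) : iterW η 0 w = w := rfl

lemma iterW_succ (η : A → List A) (k : ℕ) (w : List A) :
    iterW η (k+1) w = iterW η k (substW η w) := Function.iterate_succ_apply _ _ _

lemma iterW_succ' (η : A → List A) (k : ℕ) (w : List A) :
    iterW η (k+1) w = substW η (iterW η k w) := Function.iterate_succ_apply' _ _ _

lemma iterW_add (η : A → List A) (k l : ℕ) (w : List A) :
    iterW η (k + l) w = iterW η k (iterW η l w) := Function.iterate_add_apply _ _ _ _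

lemma iterW_nil (η : A → List A) (k : ℕ) : iterW η k [] = [] := by
  induction k with
  | zero => rfl
  | succ k ih => rw [iterW_succ', ih]; rfl

lemma iterW_append (η : A → List A) (k : ℕ) (v w : List A) :
    iterW η k (v ++ w) = iterW η k v ++ iterW η k w := by
  induction k with
  | zero => rfl
  | succ k ih => rw [iterW_succ', iterW_succ', iterW_succ', ih, substW_append]

lemma iterW_cons (η : A → List A) (k : ℕ) (c : A) (w : List A) :
    iterW η k (c :: w) = iterW η k [c] ++ iterW η k w := by
  rw [← iterW_append]; rfl

lemma prefix_iterW (η : A → List A) {v w : List A} (k : ℕ) (h : v <+: w) :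
    iterW η k v <+: iterW η k w := by
  obtain ⟨t, rfl⟩ := h
  exact ⟨iterW η k t, (iterW_append η k v t).symm⟩

lemma substW_ne_nil (hne : ∀ c, η c ≠ []) {w : List A} (hw : w ≠ []) :
    substW η w ≠ [] := by
  cases w with
  | nil => exact absurd rfl hw
  | cons c t =>
    rw [substW_cons]
    simp [hne c]

lemma iterW_ne_nil (hne : ∀ c, η c ≠ []) (k : ℕ) {w : List A} (hw : w ≠ []) :
    iterW η k w ≠ [] := by
  induction k with
  | zero => exact hw
  | succ k ih => rw [iterW_succ']; exact substW_ne_nil hne ih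

lemma length_le_substW (hne : ∀ c, η c ≠ []) (w : List A) :
    w.length ≤ (substW η w).length := by
  induction w with
  | nil => simp [substW]
  | cons c t ih =>
    rw [substW_cons]
    have := List.length_pos_iff.2 (hne c)
    simp only [List.length_append, List.length_cons]
    omega

lemma iterW_length_mono (hne : ∀ c, η c ≠ []) (w : List A) :
    Monotone (fun k => (iterW η k w).length) := by
  apply monotone_nat_of_le_succ
  intro k
  rw [iterW_succ']
  exact length_le_substW hne _

lemma singleton_prefix_headI {w : List A} {c : A} (h : [c] <+: w) : w.headI = c := by
  obtain ⟨t, rfl⟩ := h; rfl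

lemma headI_prefix {w : List A} (hw : w ≠ []) : [w.headI] <+: w := by
  cases w with
  | nil => exact absurd rfl hw
  | cons c t => exact ⟨t, rfl⟩

lemma headI_substW (hne : ∀ c, η c ≠ []) {w : List A} (hw : w ≠ []) :
    (substW η w).headI = (η w.headI).headI := by
  cases w with
  | nil => exact absurd rfl hw
  | cons c t =>
    rw [substW_cons]
    cases h : η c with
    | nil => exact absurd h (hne c)
    | cons d s => simp [h]

lemma headI_iterW (hne : ∀ c, η c ≠ []) (k : ℕ) (x : A) :
    (iterW η k [x]).headI = (fun y => (η y).headI)^[k] x := by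
  induction k with
  | zero => rfl
  | succ k ih =>
    rw [iterW_succ', headI_substW hne (iterW_ne_nil hne k (by simp)), ih,
      Function.iterate_succ_apply']

lemma concatDT_succ (η : A → List A) (k : ℕ) (m : ℕ → List A) :
    concatDT η (k+1) m = iterW η k (m k) ++ concatDT η k m := by
  simp [concatDT, List.range_succ]

lemma sumLen_succ (η : A → List A) (k : ℕ) (m : ℕ → List A) :
    sumLen η (k+1) m = sumLen η k m + (iterW η k (m k)).length :=
  Finset.sum_range_succ _ _

lemma length_concatDT (η : A → List A) (k : ℕ) (m : ℕ → List A) :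
    (concatDT η k m).length = sumLen η k m := by
  induction k with
  | zero => rfl
  | succ k ih =>
    rw [concatDT_succ, sumLen_succ, List.length_append, ih]
    omega

lemma concatDT_congr (η : A → List A) (k : ℕ) {m m' : ℕ → List A}
    (h : ∀ j < k, m j = m' j) : concatDT η k m = concatDT η k m' := by
  unfold concatDT
  congr 1
  apply List.map_congr_left
  intro j hj
  rw [List.mem_reverse, List.mem_range] at hj
  rw [h j hj]

lemma sumLen_congr (η : A → List A) (k : ℕ) {m m' : ℕ → List A}
    (h : ∀ j < k, m j = m' j) : sumLen η k m = sumLen η k m' := by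
  unfold sumLen
  exact Finset.sum_congr rfl fun j hj => by rw [h j (Finset.mem_range.1 hj)]

lemma adm_trunc {k : ℕ} {m : ℕ → List A} {a : ℕ → A} {x : A}
    (hA : AdmSeq η k m a x) {t : ℕ} (ht : t < k) : AdmSeq η t m a (a t) := by
  refine ⟨fun i hi => hA.1 i (by omega), fun h1 => ?_⟩
  have := hA.1 (t - 1) (by omega)
  rwa [Nat.sub_add_cancel h1] at this

lemma adm_pop {k : ℕ} {m : ℕ → List A} {a : ℕ → A} {x : A}
    (hA : AdmSeq η (k+1) m a x) : AdmSeq η k m a (a k) :=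
  adm_trunc hA (Nat.lt_succ_self k)

lemma adm_top {k : ℕ} {m : ℕ → List A} {a : ℕ → A} {x : A}
    (hA : AdmSeq η (k+1) m a x) : (m k ++ [a k]) <+: η x := by
  have := hA.2 (by omega)
  simpa using this

lemma sumLen_lt (hne : ∀ c, η c ≠ []) :
    ∀ (k : ℕ) (m : ℕ → List A) (a : ℕ → A) (x : A), AdmSeq η k m a x →
      sumLen η k m < (iterW η k [x]).length := by
  intro k
  induction k with
  | zero => intro m a x _; simp [sumLen, iterW_zero]
  | succ k ih =>
    intro m a x hA
    have htop := adm_top hA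
    have hsub := ih m a (a k) (adm_pop hA)
    have h1 : (iterW η k (m k ++ [a k])).length ≤ (iterW η (k+1) [x]).length := by
      rw [iterW_succ, substW_singleton]
      exact (prefix_iterW η k htop).length_le
    rw [iterW_append, List.length_append] at h1
    rw [sumLen_succ]
    omega

/-- Uniqueness of admissible sequences of a fixed length with given length-sum. -/
lemma adm_unique (hne : ∀ c, η c ≠ []) :
    ∀ (k : ℕ) (m : ℕ → List A) (a : ℕ → A) (m' : ℕ → List A) (a' : ℕ → A) (x : A),
      AdmSeq η k m a x → AdmSeq η k m' a' x → sumLen η k m = sumLen η k m' →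
      ∀ i < k, m i = m' i ∧ a i = a' i := by
  intro k
  induction k with
  | zero => intro _ _ _ _ _ _ _ _ i hi; omega
  | succ k ih =>
    intro m a m' a' x hA hA' hs
    have htop := adm_top hA
    have htop' := adm_top hA'
    have hlt : sumLen η k m < (iterW η k [a k]).length :=
      sumLen_lt hne k m a (a k) (adm_pop hA)
    have hlt' : sumLen η k m' < (iterW η k [a' k]).length :=
      sumLen_lt hne k m' a' (a' k) (adm_pop hA')
    have hsm : sumLen η (k+1) m = sumLen η k m + (iterW η k (m k)).length :=
      sumLen_succ η k m
    have hsm' : sumLen η (k+1) m' = sumLen η k m' + (iterW η k (m' k)).length :=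
      sumLen_succ η k m'
    have hkey : ∀ (m₁ : ℕ → List A) (a₁ : ℕ → A) (m₂ : ℕ → List A) (a₂ : ℕ → A),
        (m₁ k ++ [a₁ k]) <+: η x → (m₂ k ++ [a₂ k]) <+: η x →
        sumLen η k m₁ < (iterW η k [a₁ k]).length →
        sumLen η (k+1) m₁ = sumLen η (k+1) m₂ →
        ¬ (m₁ k).length < (m₂ k).length := by
      intro m₁ a₁ m₂ a₂ h₁ h₂ hl₁ hs₁₂ hlen
      have hpre : (m₁ k ++ [a₁ k]) <+: m₂ k := by
        refine List.prefix_of_prefix_length_le h₁ ((List.prefix_append _ _).trans h₂) ?_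
        simp only [List.length_append, List.length_singleton]
        omega
      have := (prefix_iterW η k hpre).length_le
      rw [iterW_append, List.length_append] at this
      have e₁ := sumLen_succ η k m₁
      have e₂ := sumLen_succ η k m₂
      have : sumLen η (k+1) m₁ < sumLen η (k+1) m₂ := by omega
      omega
    have hmm : m k = m' k := by
      have hle1 := hkey m a m' a' htop htop' hlt hs
      have hle2 := hkey m' a' m a htop' htop hlt' hs.symm
      have hlen : (m k).length = (m' k).length := by omega
      exact List.IsPrefix.eq_of_length
        (List.prefix_of_prefix_length_le ((List.prefix_append _ _).trans htop)
          ((List.prefix_append _ _).trans htop') (le_of_eq hlen)) hlen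
    have haa : a k = a' k := by
      have : (m k ++ [a k]) = (m' k ++ [a' k]) := by
        refine List.IsPrefix.eq_of_length
          (List.prefix_of_prefix_length_le htop htop' ?_) ?_ <;>
          simp [hmm]
      rw [hmm] at this
      simpa using this
    have hs' : sumLen η k m = sumLen η k m' := by
      rw [hmm] at hsm
      omega
    have hA'' : AdmSeq η k m' a' (a k) := by
      rw [haa]; exact adm_pop hA'
    intro i hi
    rcases Nat.lt_succ_iff_lt_or_eq.1 hi with h | h
    · exact ih m a m' a' (a k) (adm_pop hA) hA'' hs' i h
    · subst h; exact ⟨hmm, haa⟩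

/-- One digit-extraction step. -/
def step (η : A → List A) (k : ℕ) : List A → ℕ → Option (List A × A × ℕ)
  | [], _ => none
  | c :: w, n =>
    if n < (iterW η k [c]).length then some ([], c, n)
    else (step η k w (n - (iterW η k [c]).length)).map
      (fun q => (c :: q.1, q.2.1, q.2.2))

lemma step_spec (η : A → List A) (k : ℕ) :
    ∀ (w : List A) (n : ℕ), n < (iterW η k w).length →
      ∃ m a r, step η k w n = some (m, a, r) ∧ (m ++ [a]) <+: w ∧
        n = (iterW η k m).length + r ∧ r < (iterW η k [a]).length := by
  intro w
  induction w with
  | nil => intro n h; rw [iterW_nil] at h; simp at h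
  | cons c t ih =>
    intro n h
    by_cases hc : n < (iterW η k [c]).length
    · exact ⟨[], c, n, by simp [step, hc], ⟨t, rfl⟩, by simp [iterW_nil], hc⟩
    · rw [iterW_cons, List.length_append] at h
      obtain ⟨m, a, r, hs, hpre, hn, hr⟩ := ih (n - (iterW η k [c]).length) (by omega)
      obtain ⟨s, hsfx⟩ := hpre
      refine ⟨c :: m, a, r, ?_, ⟨s, by simp [← hsfx]⟩, ?_, hr⟩
      · simp [step, hc, hs]
      · rw [iterW_cons, List.length_append]
        omega

/-- Existence of the admissible decomposition of `take n (η^k(x))`. -/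
lemma exists_adm (hne : ∀ c, η c ≠ []) :
    ∀ (k : ℕ) (x : A) (n : ℕ), n < (iterW η k [x]).length →
      ∃ (m : ℕ → List A) (a : ℕ → A), AdmSeq η k m a x ∧ sumLen η k m = n ∧
        concatDT η k m = (iterW η k [x]).take n := by
  intro k
  induction k with
  | zero =>
    intro x n h
    simp only [iterW_zero, List.length_singleton] at h
    interval_cases n
    exact ⟨fun _ => [], fun _ => x, ⟨fun i hi => by omega, fun h1 => by omega⟩,
      by simp [sumLen], by simp [concatDT]⟩
  | succ k ih =>
    intro x n h
    rw [iterW_succ, substW_singleton] at h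
    obtain ⟨mk, ak, r, hs, hpre, hn, hr⟩ := step_spec η k (η x) n h
    obtain ⟨m₀, a₀, hA₀, hsum₀, hcat₀⟩ := ih ak r hr
    refine ⟨fun i => if i = k then mk else m₀ i, fun i => if i = k then ak else a₀ i,
      ⟨?_, ?_⟩, ?_, ?_⟩
    · intro i hi
      have hik : i < k := by omega
      by_cases hik1 : i + 1 = k
      · simp only [if_neg (by omega : ¬ i = k), hik1, if_pos rfl]
        have := hA₀.2 (by omega)
        rwa [show k - 1 = i by omega] at this
      · simp only [if_neg (by omega : ¬ i = k), if_neg hik1]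
        exact hA₀.1 i (by omega)
    · intro _
      simp only [Nat.add_sub_cancel, if_pos rfl]
      exact hpre
    · have hcg : sumLen η k (fun i => if i = k then mk else m₀ i) = sumLen η k m₀ :=
        sumLen_congr η k (fun j hj => by simp [Nat.ne_of_lt hj])
      rw [sumLen_succ, hcg]
      have he : (if k = k then mk else m₀ k) = mk := if_pos rfl
      rw [he]
      omega
    · have hcg : concatDT η k (fun i => if i = k then mk else m₀ i) = concatDT η k m₀ :=
        concatDT_congr η k (fun j hj => by simp [Nat.ne_of_lt hj])
      rw [concatDT_succ, hcg]
      have he : (if k = k then mk else m₀ k) = mk := if_pos rfl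
      rw [he, hcat₀, iterW_succ, substW_singleton]
      obtain ⟨s, hsfx⟩ := hpre
      have hxe : iterW η k (η x) = iterW η k mk ++ (iterW η k [ak] ++ iterW η k s) := by
        rw [← hsfx, iterW_append, iterW_append, List.append_assoc]
      rw [hxe, hn, List.take_length_add_append, List.take_append_of_le_length hr.le]

/-- Extension of an admissible sequence by empty digits on top. -/
lemma extend_adm (hne : ∀ c, η c ≠ []) {p : ℕ} {x : A}
    (hfp : (fun y => (η y).headI)^[p] x = x)
    {k k' : ℕ} (hkk : k < k') (hdvd : p ∣ k' - k)
    {m : ℕ → List A} {a : ℕ → A} (hA : AdmSeq η k m a x) :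
    ∃ (m'' : ℕ → List A) (a'' : ℕ → A), AdmSeq η k' m'' a'' x ∧
      (∀ i, k ≤ i → m'' i = []) ∧ sumLen η k' m'' = sumLen η k m := by
  set f : A → A := fun y => (η y).headI with hf
  have hfix : f^[k' - k] x = x := by
    obtain ⟨q, hq⟩ := hdvd
    rw [hq, Function.iterate_mul]
    exact Function.iterate_fixed hfp q
  refine ⟨fun i => if i < k then m i else [],
    fun i => if i < k then a i else f^[k' - i] x, ⟨?_, ?_⟩, ?_, ?_⟩
  · intro i hi
    by_cases h1 : i + 1 < k
    · simp only [if_pos (by omega : i < k), if_pos h1]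
      exact hA.1 i h1
    · by_cases h2 : i + 1 = k
      · simp only [if_pos (by omega : i < k), if_neg h1]
        rw [show k' - (i+1) = k' - k by omega, hfix]
        have := hA.2 (by omega)
        rwa [show k - 1 = i by omega] at this
      · simp only [if_neg (by omega : ¬ i < k), if_neg (by omega : ¬ i + 1 < k),
          List.nil_append]
        rw [show k' - i = (k' - (i+1)) + 1 by omega, Function.iterate_succ_apply']
        exact headI_prefix (hne _)
  · intro _
    simp only [if_neg (by omega : ¬ k' - 1 < k), List.nil_append]
    rw [show k' - (k' - 1) = 1 by omega, Function.iterate_one]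
    exact headI_prefix (hne x)
  · intro i hi
    simp [Nat.not_lt.2 hi]
  · simp only [sumLen]
    have h1 : ∑ j ∈ Finset.range k', (iterW η j (if j < k then m j else [])).length
        = ∑ j ∈ Finset.range k, (iterW η j (if j < k then m j else [])).length := by
      refine (Finset.sum_subset (Finset.range_subset_range.2 hkk.le) ?_).symm
      intro j _ hj'
      rw [Finset.mem_range, not_lt] at hj'
      rw [if_neg (by omega), iterW_nil]
      rfl
    rw [h1]
    exact Finset.sum_congr rfl fun j hj => by
      rw [Finset.mem_range] at hj
      rw [if_pos hj]

end DTAux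

/-- Dumont–Thomas theorem for right-infinite periodic points.
If `u` is a right-infinite periodic point of `η` of period `p` with growing seed
`u 0`, then every `n ≥ 1` admits a unique `k` divisible by `p` and a unique
`u 0`-admissible sequence `(m_i,a_i)_{i=0,…,k-1}` with `m_{k-1} ⋯ m_{k-p} ≠ ε`
and `u_0 ⋯ u_{n-1} = η^{k-1}(m_{k-1}) ⋯ η^0(m_0)`. -/
theorem dumont_thomas_right [Finite A] (η : A → List A) (hη : IsSubstitution η)
    (p : ℕ) (hp : 1 ≤ p) (u : ℕ → A)
    (hgrow : Tendsto (fun k => (iterW η k [u 0]).length) atTop atTop)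
    (hper : ∀ n : ℕ, ∀ j : ℕ,
      j < (iterW η p (List.ofFn (fun i : Fin (n+1) => u i))).length →
      (iterW η p (List.ofFn (fun i : Fin (n+1) => u i)))[j]? = some (u j))
    (n : ℕ) (hn : 1 ≤ n) :
    ∃ (k : ℕ) (m : ℕ → List A) (a : ℕ → A),
      (p ∣ k ∧ p ≤ k ∧ AdmSeq η k m a (u 0) ∧
        (∃ i, i < p ∧ m (k - 1 - i) ≠ []) ∧
        (concatDT η k m).length = n ∧
        ∀ j < n, (concatDT η k m)[j]? = some (u j)) ∧
      ∀ (k' : ℕ) (m' : ℕ → List A) (a' : ℕ → A),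
        (p ∣ k' ∧ p ≤ k' ∧ AdmSeq η k' m' a' (u 0) ∧
          (∃ i, i < p ∧ m' (k' - 1 - i) ≠ []) ∧
          (concatDT η k' m').length = n ∧
          ∀ j < n, (concatDT η k' m')[j]? = some (u j)) →
        k = k' ∧ ∀ i < k, m i = m' i ∧ a i = a' i := by
  obtain ⟨hne, -⟩ := hη
  classical
  letI : Inhabited A := ⟨u 0⟩
  set f : A → A := fun y => (η y).headI with hf
  have hof1 : List.ofFn (fun i : Fin 1 => u i) = [u 0] := by
    simp [List.ofFn_succ]
  have hWne : ∀ j, iterW η j [u 0] ≠ [] := fun j => iterW_ne_nil hne j (by simp)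
  have h00 : (iterW η p [u 0])[0]? = some (u 0) := by
    have := hper 0 0 (by rw [hof1]; exact List.length_pos_iff.2 (hWne p))
    rwa [hof1] at this
  have hhead : (iterW η p [u 0]).headI = u 0 := by
    cases hW : iterW η p [u 0] with
    | nil => exact absurd hW (hWne p)
    | cons c t => rw [hW] at h00; simp_all
  have hfp : f^[p] (u 0) = u 0 := by rw [hf, ← headI_iterW hne]; exact hhead
  have hstep : ∀ w : List A, w ≠ [] → (∀ j < w.length, w[j]? = some (u j)) →
      ∀ j < (iterW η p w).length, (iterW η p w)[j]? = some (u j) := by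
    intro w hw hwp
    obtain ⟨L, hL⟩ : ∃ L, w.length = L + 1 := by
      cases w with
      | nil => exact absurd rfl hw
      | cons c t => exact ⟨t.length, rfl⟩
    have hw' : w = List.ofFn (fun i : Fin (L+1) => u i) := by
      apply List.ext_getElem?
      intro j
      by_cases hj : j < L + 1
      · rw [hwp j (by omega), List.getElem?_ofFn]
        simp [List.ofFnNthVal, hj]
      · rw [List.getElem?_eq_none (by omega), List.getElem?_ofFn]
        simp [List.ofFnNthVal, hj]
    rw [hw']
    intro j hj
    exact hper L j hj
  have hprefmul : ∀ q : ℕ, ∀ j < (iterW η (q * p) [u 0]).length,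
      (iterW η (q * p) [u 0])[j]? = some (u j) := by
    intro q
    induction q with
    | zero =>
      intro j hj
      simp only [Nat.zero_mul, iterW_zero, List.length_singleton] at hj
      interval_cases j
      simp [Nat.zero_mul, iterW_zero]
    | succ q ih =>
      have he : (q+1) * p = p + q * p := by ring
      rw [he, iterW_add]
      exact hstep _ (hWne _) ih
  have hex : ∃ qq : ℕ, n < (iterW η (qq * p) [u 0]).length := by
    obtain ⟨K, hK⟩ := Filter.eventually_atTop.1 (hgrow.eventually_gt_atTop n)
    exact ⟨K, hK (K * p) (Nat.le_mul_of_pos_right K hp)⟩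
  obtain ⟨q0, hq0spec, hq0min⟩ : ∃ q0 : ℕ, n < (iterW η (q0 * p) [u 0]).length ∧
      ∀ q' < q0, (iterW η (q' * p) [u 0]).length ≤ n := by
    refine ⟨Nat.find hex, Nat.find_spec hex, fun q' hq' => ?_⟩
    have := Nat.find_min hex hq'
    omega
  have hq0pos : 1 ≤ q0 := by
    rcases Nat.eq_zero_or_pos q0 with h | h
    · exfalso
      rw [h] at hq0spec
      simp only [Nat.zero_mul, iterW_zero, List.length_singleton] at hq0spec
      omega
    · exact h
  set k := q0 * p with hk
  have hdvdk : p ∣ k := dvd_mul_left p q0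
  have hkp : p ≤ k := by
    calc p = 1 * p := (one_mul p).symm
    _ ≤ q0 * p := Nat.mul_le_mul_right p hq0pos
  have hlow : (iterW η (k - p) [u 0]).length ≤ n := by
    have hmin := hq0min (q0 - 1) (by omega)
    have he : (q0 - 1) * p = k - p := by rw [hk, Nat.sub_one_mul]
    rwa [he] at hmin
  obtain ⟨m, a, hA, hsum, hcat⟩ := exists_adm hne k (u 0) n hq0spec
  have hlen : (concatDT η k m).length = n := by
    rw [hcat, List.length_take]
    omega
  have hprefk : ∀ j, j < (iterW η k [u 0]).length → (iterW η k [u 0])[j]? = some (u j) := by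
    rw [hk]
    exact hprefmul q0
  have hvals : ∀ j < n, (concatDT η k m)[j]? = some (u j) := by
    intro j hj
    rw [hcat, List.getElem?_take_of_lt hj]
    exact hprefk j (by omega)
  have hne_top : ∃ i, i < p ∧ m (k - 1 - i) ≠ [] := by
    by_contra hcon
    push_neg at hcon
    have hachain : ∀ i, i < p → a (k - 1 - i) = f^[i+1] (u 0) := by
      intro i
      induction i with
      | zero =>
        intro _
        have h1 := hA.2 (by omega)
        have h0 : m (k - 1) = [] := by simpa using hcon 0 (by omega)
        rw [h0, List.nil_append] at h1
        simp only [Nat.sub_zero, Nat.zero_add, Function.iterate_one]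
        exact (singleton_prefix_headI h1).symm
      | succ i ihh =>
        intro hip
        have hprev := ihh (by omega)
        have hj := hA.1 (k - 2 - i) (by omega)
        rw [show k - 2 - i + 1 = k - 1 - i by omega, hprev] at hj
        have h0 : m (k - 2 - i) = [] := by
          have := hcon (i+1) hip
          rwa [show k - 1 - (i+1) = k - 2 - i by omega] at this
        rw [h0, List.nil_append] at hj
        rw [show k - 1 - (i+1) = k - 2 - i by omega, Function.iterate_succ_apply']
        exact (singleton_prefix_headI hj).symm
    have hap : a (k - p) = u 0 := by
      have := hachain (p-1) (by omega)
      rwa [show k - 1 - (p-1) = k - p by omega, show p - 1 + 1 = p by omega, hfp] at this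
    have hsub : AdmSeq η (k - p) m a (u 0) := by
      rw [← hap]; exact adm_trunc hA (by omega)
    have hslt := sumLen_lt hne (k - p) m a (u 0) hsub
    have hseq : sumLen η k m = sumLen η (k - p) m := by
      simp only [sumLen]
      refine (Finset.sum_subset (Finset.range_subset_range.2 (by omega)) ?_).symm
      intro j hj hj'
      rw [Finset.mem_range] at hj
      rw [Finset.mem_range, not_lt] at hj'
      have hmj : m j = [] := by
        have := hcon (k - 1 - j) (by omega)
        rwa [show k - 1 - (k - 1 - j) = j by omega] at this
      rw [hmj, iterW_nil]
      rfl
    omega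
  refine ⟨k, m, a, ⟨hdvdk, hkp, hA, hne_top, hlen, hvals⟩, ?_⟩
  intro k' m' a' h'
  obtain ⟨hd', hkp2, hA', hnz', hlen', -⟩ := h'
  have hsum' : sumLen η k' m' = n := by rw [← length_concatDT]; exact hlen'
  have hkeq : k = k' := by
    by_contra hkne
    rcases Nat.lt_or_ge k k' with hlt | hge
    · obtain ⟨m'', a'', hA'', hz'', hs''⟩ :=
        extend_adm hne hfp hlt (Nat.dvd_sub hd' hdvdk) hA
      have huniq := adm_unique hne k' m'' a'' m' a' (u 0) hA'' hA'
        (by rw [hs'', hsum, hsum'])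
      obtain ⟨i0, hi0, hne0⟩ := hnz'
      refine hne0 ?_
      rw [← (huniq (k' - 1 - i0) (by omega)).1]
      apply hz''
      have hpk : p ≤ k' - k := Nat.le_of_dvd (by omega) (Nat.dvd_sub hd' hdvdk)
      omega
    · have hlt : k' < k := by omega
      obtain ⟨m'', a'', hA'', hz'', hs''⟩ :=
        extend_adm hne hfp hlt (Nat.dvd_sub hdvdk hd') hA'
      have huniq := adm_unique hne k m'' a'' m a (u 0) hA'' hA
        (by rw [hs'', hsum', hsum])
      obtain ⟨i0, hi0, hne0⟩ := hne_top
      refine hne0 ?_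
      rw [← (huniq (k - 1 - i0) (by omega)).1]
      apply hz''
      have hpk : p ≤ k - k' := Nat.le_of_dvd (by omega) (Nat.dvd_sub hdvdk hd')
      omega
  subst hkeq
  exact ⟨rfl, adm_unique hne k m a m' a' (u 0) hA hA' (by rw [hsum, hsum'])⟩
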